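/- Let K > 1, 0 < R < 1 and S > 0, and suppose |ω_i| ≤ K·R^i and |ω_{−i}| ≤ K·S^i for all i ≥ 1. Let 0 < c < (1 + K²·(R+S)²)^{−1/2}. Then ∑_{η,ν} |v_{η,ν}(ω)|²·c^{2‖ν‖} < ∞, the sum extending over all pairs of multi-indices; equivalently, the operator B(ω) on H with matrix elements ⟨e_η, B(ω)e_ν⟩ = v_{η,ν}(ω)·c^{‖ν‖} (i.e. B(ω) = V(ω)·c^{N} with N the number operator, N e_ν = ‖ν‖·e_ν) is a Hilbert–Schmidt operator. -/

import Mathlib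

/-- A multi-index: a finitely supported function from the positive integers to `ℕ`. -/
abbrev MultiIndex := ℕ+ →₀ ℕ

/-- The polynomial `m_{n,m}(x,y) = ∑_{j=0}^{min(n,m)} (n choose j)(m choose j) j! x^{n-j} y^{m-j}`. -/
def mPoly {R : Type*} [CommSemiring R] (n m : ℕ) (x y : R) : R :=
  ∑ j ∈ Finset.range (min n m + 1),
    (n.choose j : R) * (m.choose j : R) * (Nat.factorial j : R) * x ^ (n - j) * y ^ (m - j)

/-- `η! = ∏_{i≥1} η_i!`. -/
def miFact (η : MultiIndex) : ℕ := ∏ i ∈ η.support, Nat.factorial (η i)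

/-- The matrix element `v_{η,ν}(ω) = (η!·ν!)^{-1/2} ∏_{i≥1} m_{η_i,ν_i}(ω_i, -ω_{-i})`;
the product is finite since `m_{0,0} = 1`. -/
noncomputable def vElem (ωp ωm : ℕ+ → ℂ) (η ν : MultiIndex) : ℂ :=
  ((1 / Real.sqrt ((miFact η : ℝ) * (miFact ν : ℝ))) : ℝ) *
    ∏ i ∈ η.support ∪ ν.support, mPoly (η i) (ν i) (ωp i) (-ωm i)

/-- The weight `‖η‖ = ∑_{i≥1} i·η_i` of a multi-index. -/
def miWt (η : MultiIndex) : ℕ := ∑ i ∈ η.support, (i : ℕ) * η i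

namespace Aux

lemma mPoly_eq_range {n m : ℕ} (N : ℕ) (hN : min n m + 1 ≤ N) (x y : ℝ) :
    mPoly n m x y = ∑ j ∈ Finset.range N,
      (n.choose j : ℝ) * (m.choose j : ℝ) * (Nat.factorial j : ℝ) * x ^ (n - j) * y ^ (m - j) := by
  rw [mPoly]
  apply Finset.sum_subset (Finset.range_subset_range.2 hN)
  intro j _ hj'
  simp only [Finset.mem_range, not_lt] at hj'
  rcases lt_or_ge n j with h | h
  · simp [Nat.choose_eq_zero_of_lt h]
  · have : m < j := by omega
    simp [Nat.choose_eq_zero_of_lt this]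

lemma mPoly_symm (n m : ℕ) (x y : ℝ) : mPoly n m x y = mPoly m n y x := by
  rw [mPoly, mPoly, min_comm]
  exact Finset.sum_congr rfl fun j _ => by ring

lemma mPoly_zero_right (n : ℕ) (x y : ℝ) : mPoly n 0 x y = x ^ n := by
  simp [mPoly]

lemma mPoly_zero_left (m : ℕ) (x y : ℝ) : mPoly 0 m x y = y ^ m := by
  simp [mPoly]

lemma choose_mul_factorial_succ (n k : ℕ) :
    (n.choose (k+1)) * (k+1).factorial = n * ((n-1).choose k * k.factorial) := by
  cases n with
  | zero => simp [Nat.choose_eq_zero_of_lt (Nat.succ_pos k)]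
  | succ n' =>
    have h := Nat.add_one_mul_choose_eq n' k
    rw [Nat.factorial_succ]
    calc (n'+1).choose (k+1) * ((k+1) * k.factorial)
        = ((n'+1).choose (k+1) * (k+1)) * k.factorial := by ring
      _ = ((n'+1) * n'.choose k) * k.factorial := by rw [← h]
      _ = (n'+1) * (((n'+1)-1).choose k * k.factorial) := by simp [mul_assoc]

lemma mPoly_succ_right (n m : ℕ) (x y : ℝ) :
    mPoly n (m+1) x y = y * mPoly n m x y + (n : ℝ) * mPoly (n-1) m x y := by
  have key : ∀ k : ℕ,
      ((n.choose (k+1) : ℝ)) * ((m+1).choose (k+1) : ℝ) * ((k+1).factorial : ℝ)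
          * x ^ (n - (k+1)) * y ^ ((m+1) - (k+1))
        = y * ((n.choose (k+1) : ℝ) * (m.choose (k+1) : ℝ) * ((k+1).factorial : ℝ)
            * x ^ (n - (k+1)) * y ^ (m - (k+1)))
          + (n : ℝ) * (((n-1).choose k : ℝ) * (m.choose k : ℝ) * (k.factorial : ℝ)
            * x ^ ((n-1) - k) * y ^ (m - k)) := by
    intro k
    have hsplit : (m+1).choose (k+1) = m.choose k + m.choose (k+1) := Nat.choose_succ_succ m k
    have hfac : ((n.choose (k+1) : ℝ)) * ((k+1).factorial : ℝ)
        = (n : ℝ) * (((n-1).choose k : ℝ) * (k.factorial : ℝ)) := by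
      exact_mod_cast congrArg (Nat.cast (R := ℝ)) (choose_mul_factorial_succ n k)
    have hxe : n - (k+1) = (n-1) - k := by omega
    have hye : (m+1) - (k+1) = m - k := by omega
    rw [hsplit, hxe, hye]
    push_cast
    rcases lt_or_ge k m with h | h
    · have hy2 : m - k = (m - (k+1)) + 1 := by omega
      rw [hy2, pow_succ]
      linear_combination ((m.choose k : ℝ) * x ^ (n-1-k) * y ^ (m-(k+1)) * y) * hfac
    · have h1 : m.choose (k+1) = 0 := Nat.choose_eq_zero_of_lt (by omega)
      have hy0 : m - k = 0 := by omega
      have hy1 : m - (k+1) = 0 := by omega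
      rw [h1, hy0, hy1]
      push_cast
      linear_combination ((m.choose k : ℝ) * x ^ (n-1-k)) * hfac
  rw [mPoly_eq_range (n := n) (m := m+1) (n+m+2) (by omega) x y,
      mPoly_eq_range (n := n) (m := m) (n+m+2) (by omega) x y,
      mPoly_eq_range (n := n-1) (m := m) (n+m+1) (by omega) x y,
      Finset.sum_range_succ' _ (n+m+1), Finset.sum_range_succ' _ (n+m+1)]
  simp only [key]
  rw [Finset.sum_add_distrib, mul_add, Finset.mul_sum, Finset.mul_sum]
  simp [pow_succ]
  ring


lemma mPoly_succ_left (n m : ℕ) (x y : ℝ) :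
    mPoly (n+1) m x y = x * mPoly n m x y + (m : ℝ) * mPoly n (m-1) x y := by
  rw [mPoly_symm (n+1) m, mPoly_succ_right m n y x, mPoly_symm n m x y,
    mPoly_symm n (m-1) x y]

lemma mPoly_nonneg {n m : ℕ} {x y : ℝ} (hx : 0 ≤ x) (hy : 0 ≤ y) : 0 ≤ mPoly n m x y :=
  Finset.sum_nonneg fun j _ => by positivity

lemma mPoly_mono {n m : ℕ} {x y x' y' : ℝ} (hx : 0 ≤ x) (hy : 0 ≤ y)
    (hx' : x ≤ x') (hy' : y ≤ y') : mPoly n m x y ≤ mPoly n m x' y' := by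
  refine Finset.sum_le_sum fun j _ => ?_
  have h1 : x ^ (n-j) ≤ x' ^ (n-j) := pow_le_pow_left₀ hx hx' _
  have h2 : y ^ (m-j) ≤ y' ^ (m-j) := pow_le_pow_left₀ hy hy' _
  have hc : (0:ℝ) ≤ (n.choose j : ℝ) * (m.choose j : ℝ) * (j.factorial : ℝ) := by positivity
  calc (n.choose j : ℝ) * (m.choose j : ℝ) * (j.factorial : ℝ) * x ^ (n-j) * y ^ (m-j)
      ≤ (n.choose j : ℝ) * (m.choose j : ℝ) * (j.factorial : ℝ) * x' ^ (n-j) * y ^ (m-j) := by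
        apply mul_le_mul_of_nonneg_right _ (pow_nonneg hy _)
        exact mul_le_mul_of_nonneg_left h1 hc
    _ ≤ (n.choose j : ℝ) * (m.choose j : ℝ) * (j.factorial : ℝ) * x' ^ (n-j) * y' ^ (m-j) := by
        apply mul_le_mul_of_nonneg_left h2
        have : (0:ℝ) ≤ x' ^ (n-j) := pow_nonneg (hx.trans hx') _
        positivity

lemma norm_mPoly_le (n m : ℕ) (x y : ℂ) : ‖mPoly n m x y‖ ≤ mPoly n m ‖x‖ ‖y‖ := by
  refine le_trans (norm_sum_le _ _) (le_of_eq (Finset.sum_congr rfl fun j _ => ?_))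
  simp [norm_mul, norm_pow]

lemma choose_le_two_pow (n j : ℕ) : n.choose j ≤ 2 ^ n := by
  rcases le_or_gt j n with h | h
  · calc n.choose j ≤ ∑ k ∈ Finset.range (n+1), n.choose k :=
        Finset.single_le_sum (fun k _ => Nat.zero_le _) (Finset.mem_range.2 (by omega))
    _ = 2 ^ n := Nat.sum_range_choose n
  · rw [Nat.choose_eq_zero_of_lt h]; exact Nat.zero_le _

lemma mPoly_le_bound (n m : ℕ) {a b : ℝ} (ha : 0 ≤ a) (hb : 0 ≤ b) :
    mPoly n m a b ≤ ((m+1).factorial : ℝ) * (max b 1) ^ m * (2 * max a 1) ^ n := by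
  have hA1 : (1:ℝ) ≤ max a 1 := le_max_right _ _
  have hB1 : (1:ℝ) ≤ max b 1 := le_max_right _ _
  have hterm : ∀ j ∈ Finset.range (min n m + 1),
      (n.choose j : ℝ) * (m.choose j : ℝ) * (j.factorial : ℝ) * a ^ (n-j) * b ^ (m-j)
        ≤ (m.factorial : ℝ) * (max b 1) ^ m * (2 * max a 1) ^ n := by
    intro j hj
    have hjm : j ≤ m := by
      have := Finset.mem_range.1 hj; omega
    have h1 : (n.choose j : ℝ) ≤ 2 ^ n := by exact_mod_cast choose_le_two_pow n j
    have h2 : (m.choose j : ℝ) * (j.factorial : ℝ) ≤ (m.factorial : ℝ) := by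
      have := Nat.choose_mul_factorial_mul_factorial hjm
      have h3 : m.choose j * j.factorial ≤ m.factorial := by
        calc m.choose j * j.factorial ≤ m.choose j * j.factorial * (m-j).factorial :=
          Nat.le_mul_of_pos_right _ (Nat.factorial_pos _)
        _ = m.factorial := this
      exact_mod_cast h3
    have h4 : a ^ (n-j) ≤ (max a 1) ^ n := by
      calc a ^ (n-j) ≤ (max a 1) ^ (n-j) := pow_le_pow_left₀ ha (le_max_left _ _) _
      _ ≤ (max a 1) ^ n := pow_le_pow_right₀ hA1 (by omega)
    have h5 : b ^ (m-j) ≤ (max b 1) ^ m := by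
      calc b ^ (m-j) ≤ (max b 1) ^ (m-j) := pow_le_pow_left₀ hb (le_max_left _ _) _
      _ ≤ (max b 1) ^ m := pow_le_pow_right₀ hB1 (by omega)
    calc (n.choose j : ℝ) * (m.choose j : ℝ) * (j.factorial : ℝ) * a ^ (n-j) * b ^ (m-j)
        ≤ (2:ℝ)^n * ((m.factorial : ℝ)) * (max a 1)^n * (max b 1)^m := by
          have hnn : (0:ℝ) ≤ a ^ (n-j) := pow_nonneg ha _
          have hnn' : (0:ℝ) ≤ b ^ (m-j) := pow_nonneg hb _
          have e1 : (0:ℝ) ≤ (max a 1) ^ n := by positivity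
          have e2 : (0:ℝ) ≤ (max b 1) ^ m := by positivity
          calc (n.choose j : ℝ) * (m.choose j : ℝ) * (j.factorial : ℝ) * a ^ (n-j) * b ^ (m-j)
              = ((n.choose j : ℝ)) * ((m.choose j : ℝ) * (j.factorial : ℝ)) * (a ^ (n-j) * b ^ (m-j)) := by ring
            _ ≤ ((2:ℝ)^n) * ((m.factorial : ℝ)) * ((max a 1)^n * (max b 1)^m) := by
                apply mul_le_mul
                · apply mul_le_mul h1 h2 (by positivity) (by positivity)
                · exact mul_le_mul h4 h5 hnn' e1
                · positivity
                · positivity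
            _ = (2:ℝ)^n * ((m.factorial : ℝ)) * (max a 1)^n * (max b 1)^m := by ring
      _ = (m.factorial : ℝ) * (max b 1) ^ m * (2 * max a 1) ^ n := by
          rw [mul_pow]; ring
  calc mPoly n m a b ≤ ∑ _j ∈ Finset.range (min n m + 1),
        (m.factorial : ℝ) * (max b 1) ^ m * (2 * max a 1) ^ n := Finset.sum_le_sum hterm
    _ = ((min n m + 1 : ℕ) : ℝ) * ((m.factorial : ℝ) * (max b 1) ^ m * (2 * max a 1) ^ n) := by
        rw [Finset.sum_const, Finset.card_range, nsmul_eq_mul]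
    _ ≤ ((m+1).factorial : ℝ) * (max b 1) ^ m * (2 * max a 1) ^ n := by
        have h6 : ((min n m + 1 : ℕ) : ℝ) * (m.factorial : ℝ) ≤ ((m+1).factorial : ℝ) := by
          have : (min n m + 1) * m.factorial ≤ (m+1).factorial := by
            rw [Nat.factorial_succ]
            exact Nat.mul_le_mul_right _ (by omega)
          exact_mod_cast this
        have e2 : (0:ℝ) ≤ (max b 1) ^ m := by positivity
        have e3 : (0:ℝ) ≤ (2 * max a 1) ^ n := by positivity
        calc ((min n m + 1 : ℕ) : ℝ) * ((m.factorial : ℝ) * (max b 1) ^ m * (2 * max a 1) ^ n)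
            = (((min n m + 1 : ℕ) : ℝ) * (m.factorial : ℝ)) * ((max b 1) ^ m * (2 * max a 1) ^ n) := by ring
          _ ≤ ((m+1).factorial : ℝ) * ((max b 1) ^ m * (2 * max a 1) ^ n) := by
              apply mul_le_mul_of_nonneg_right h6 (by positivity)
          _ = ((m+1).factorial : ℝ) * (max b 1) ^ m * (2 * max a 1) ^ n := by ring

lemma summable_mPoly_mul (m m' : ℕ) {a b : ℝ} (ha : 0 ≤ a) (hb : 0 ≤ b) :
    Summable (fun n => mPoly n m a b * mPoly n m' a b / (n.factorial : ℝ)) := by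
  set C : ℝ := ((m+1).factorial : ℝ) * (max b 1) ^ m * (((m'+1).factorial : ℝ) * (max b 1) ^ m')
  apply Summable.of_nonneg_of_le
    (fun n => div_nonneg (mul_nonneg (mPoly_nonneg ha hb) (mPoly_nonneg ha hb))
      (Nat.cast_nonneg _)) (fun n => ?_)
    (((Real.summable_pow_div_factorial ((2 * max a 1)^2)).mul_left C))
  have h1 := mPoly_le_bound n m ha hb
  have h2 := mPoly_le_bound n m' ha hb
  have hfac : (0:ℝ) < (n.factorial : ℝ) := by exact_mod_cast Nat.factorial_pos n
  rw [div_le_iff₀ hfac]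
  have key : mPoly n m a b * mPoly n m' a b ≤ C * ((2 * max a 1)^2)^n := by
    calc mPoly n m a b * mPoly n m' a b
        ≤ (((m+1).factorial : ℝ) * (max b 1) ^ m * (2 * max a 1) ^ n)
          * (((m'+1).factorial : ℝ) * (max b 1) ^ m' * (2 * max a 1) ^ n) := by
          apply mul_le_mul h1 h2 (mPoly_nonneg ha hb) (by positivity)
      _ = C * ((2 * max a 1)^2)^n := by rw [← pow_mul, pow_mul']; ring
  calc mPoly n m a b * mPoly n m' a b ≤ C * ((2 * max a 1)^2)^n := key
    _ = C * ((2 * max a 1)^2)^n / (n.factorial : ℝ) * (n.factorial : ℝ) := by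
        field_simp
  exact le_of_eq (by rw [mul_div_assoc])


lemma hasSum_exp_series (x : ℝ) : HasSum (fun n => x ^ n / (n.factorial : ℝ)) (Real.exp x) := by
  rw [Real.exp_eq_exp_ℝ]
  exact NormedSpace.expSeries_div_hasSum_exp x

lemma hasSum_exp_sq (a : ℝ) :
    HasSum (fun n => a^n * a^n / (n.factorial : ℝ)) (Real.exp (a^2)) := by
  have h := hasSum_exp_series (a^2)
  have e : (fun n => (a^2) ^ n / (n.factorial : ℝ))
      = fun n => a^n * a^n / (n.factorial : ℝ) := by
    funext n
    rw [← pow_mul, two_mul, pow_add]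
  rwa [e] at h

lemma hasSum_shift {f : ℕ → ℝ} {S : ℝ}
    (h : HasSum (fun k => f (k+1)) S) (h0 : f 0 = 0) : HasSum f S := by
  have := (hasSum_nat_add_iff (f := f) 1).1 h
  simpa [h0] using this

lemma keyId_zero {a b : ℝ} (m' : ℕ) :
    HasSum (fun n => a^n * mPoly n m' a b / (n.factorial : ℝ))
      (Real.exp (a^2) * (a+b)^m') := by
  induction m' with
  | zero =>
    simpa [mPoly_zero_right] using hasSum_exp_sq a
  | succ m' ih =>
    have h1 := ih.mul_left b
    have h2 : HasSum (fun n : ℕ => (n:ℝ) * (a^n * mPoly (n-1) m' a b) / (n.factorial : ℝ))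
        (a * (Real.exp (a^2) * (a+b)^m')) := by
      apply hasSum_shift
      · convert ih.mul_left a using 1
        rfl
        funext k
        simp only [Nat.add_sub_cancel]
        have h4 : ((k+1).factorial : ℝ) = ((k:ℝ)+1) * (k.factorial : ℝ) := by
          rw [Nat.factorial_succ]; push_cast; ring
        have h6 : (k.factorial : ℝ) ≠ 0 := by
          exact_mod_cast (Nat.factorial_pos k).ne'
        push_cast
        rw [h4]
        field_simp
        ring
      · simp
    have e2 : (fun n => a^n * mPoly n (m'+1) a b / (n.factorial : ℝ))
        = fun n : ℕ => b * (a^n * mPoly n m' a b / (n.factorial : ℝ))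
          + (n:ℝ) * (a^n * mPoly (n-1) m' a b) / (n.factorial : ℝ) := by
      funext n
      rw [mPoly_succ_right]
      ring
    rw [e2]
    convert h1.add h2 using 1
    rfl
    rw [pow_succ]
    ring

lemma keyId {a b : ℝ} (ha : 0 ≤ a) (hb : 0 ≤ b) :
    ∀ m m' : ℕ, HasSum (fun n => mPoly n m a b * mPoly n m' a b / (n.factorial : ℝ))
      (Real.exp (a^2) * mPoly m m' (a+b) (a+b)) := by
  intro m
  induction m with
  | zero =>
    intro m'
    have h := keyId_zero (a := a) (b := b) m'
    have e : (fun n => a^n * mPoly n m' a b / (n.factorial : ℝ))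
        = fun n => mPoly n 0 a b * mPoly n m' a b / (n.factorial : ℝ) := by
      funext n; rw [mPoly_zero_right]
    rw [e] at h
    rw [mPoly_zero_left m' (a+b) (a+b)]
    exact h
  | succ m ih =>
    intro m'
    have h1 := (ih m').mul_left b
    have h2 : HasSum (fun n : ℕ => (n:ℝ) * (mPoly (n-1) m a b * mPoly n m' a b) / (n.factorial : ℝ))
        (a * (Real.exp (a^2) * mPoly m m' (a+b) (a+b))
          + (m':ℝ) * (Real.exp (a^2) * mPoly m (m'-1) (a+b) (a+b))) := by
      apply hasSum_shift
      · convert ((ih m').mul_left a).add ((ih (m'-1)).mul_left (m':ℝ)) using 1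
        rfl
        funext k
        simp only [Nat.add_sub_cancel]
        rw [mPoly_succ_left k m' a b]
        have h4 : ((k+1).factorial : ℝ) = ((k:ℝ)+1) * (k.factorial : ℝ) := by
          rw [Nat.factorial_succ]; push_cast; ring
        have h6 : (k.factorial : ℝ) ≠ 0 := by
          exact_mod_cast (Nat.factorial_pos k).ne'
        push_cast
        rw [h4]
        field_simp
      · simp
    have e2 : (fun n => mPoly n (m+1) a b * mPoly n m' a b / (n.factorial : ℝ))
        = fun n : ℕ => b * (mPoly n m a b * mPoly n m' a b / (n.factorial : ℝ))
          + (n:ℝ) * (mPoly (n-1) m a b * mPoly n m' a b) / (n.factorial : ℝ) := by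
      funext n
      rw [mPoly_succ_right]
      ring
    rw [e2]
    convert h1.add h2 using 1
    rfl
    rw [mPoly_succ_left m m' (a+b) (a+b)]
    ring


lemma choose_sq_fact_le (m j : ℕ) (hj : j ≤ m) :
    m.choose j ^ 2 * j.factorial ≤ m.choose j * m.factorial := by
  have h1 : m.choose j * j.factorial ≤ m.factorial := by
    calc m.choose j * j.factorial ≤ m.choose j * j.factorial * (m-j).factorial :=
      Nat.le_mul_of_pos_right _ (Nat.factorial_pos _)
    _ = m.factorial := Nat.choose_mul_factorial_mul_factorial hj
  calc m.choose j ^ 2 * j.factorial = m.choose j * (m.choose j * j.factorial) := by ring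
    _ ≤ m.choose j * m.factorial := Nat.mul_le_mul_left _ h1

lemma mPoly_diag_div_le {s : ℝ} (hs : 0 ≤ s) (m : ℕ) :
    mPoly m m s s / (m.factorial : ℝ) ≤ (1 + s^2)^m := by
  have hfac : (0:ℝ) < (m.factorial : ℝ) := by exact_mod_cast Nat.factorial_pos m
  rw [div_le_iff₀ hfac]
  have hbin : ((1:ℝ) + s^2)^m = ∑ j ∈ Finset.range (m+1), (s^2)^(m-j) * (m.choose j : ℝ) := by
    rw [add_pow]
    exact Finset.sum_congr rfl fun j _ => by rw [one_pow]; ring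
  rw [hbin, Finset.sum_mul, mPoly, min_self]
  refine Finset.sum_le_sum fun j hj => ?_
  have hjm : j ≤ m := by have := Finset.mem_range.1 hj; omega
  have h1 : ((m.choose j : ℕ) : ℝ)^2 * (j.factorial : ℝ) ≤ (m.choose j : ℝ) * (m.factorial : ℝ) := by
    exact_mod_cast choose_sq_fact_le m j hjm
  calc (m.choose j : ℝ) * (m.choose j : ℝ) * (j.factorial : ℝ) * s ^ (m-j) * s ^ (m-j)
      = ((m.choose j : ℝ)^2 * (j.factorial : ℝ)) * (s^2) ^ (m-j) := by
        rw [← pow_mul, two_mul, pow_add]; ring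
    _ ≤ ((m.choose j : ℝ) * (m.factorial : ℝ)) * (s^2) ^ (m-j) := by
        apply mul_le_mul_of_nonneg_right h1 (by positivity)
    _ = (s^2)^(m-j) * (m.choose j : ℝ) * (m.factorial : ℝ) := by ring

lemma modeBound {a b t θ : ℝ} (ha : 0 ≤ a) (hb : 0 ≤ b) (ht : 0 ≤ t)
    (hθ : (1+(a+b)^2) * t ≤ θ) (hθ1 : θ < 1) (M M' : ℕ) :
    ∑ n ∈ Finset.range M, ∑ m ∈ Finset.range M',
        mPoly n m a b ^ 2 / ((n.factorial : ℝ) * (m.factorial : ℝ)) * t^m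
      ≤ Real.exp (a^2) * (1-θ)⁻¹ := by
  have hθ0 : (0:ℝ) ≤ θ := le_trans (by positivity) hθ
  have hs : (0:ℝ) ≤ a + b := by positivity
  rw [Finset.sum_comm]
  have inner : ∀ m : ℕ, ∑ n ∈ Finset.range M,
      mPoly n m a b ^ 2 / ((n.factorial : ℝ) * (m.factorial : ℝ)) * t^m
      ≤ Real.exp (a^2) * θ^m := by
    intro m
    have hmfac : (0:ℝ) < (m.factorial : ℝ) := by exact_mod_cast Nat.factorial_pos m
    have e : ∀ n : ℕ, mPoly n m a b ^ 2 / ((n.factorial : ℝ) * (m.factorial : ℝ)) * t^m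
        = (mPoly n m a b * mPoly n m a b / (n.factorial : ℝ)) * (t^m / (m.factorial : ℝ)) := by
      intro n; rw [sq]; ring
    have h1 : ∑ n ∈ Finset.range M, mPoly n m a b * mPoly n m a b / (n.factorial : ℝ)
        ≤ Real.exp (a^2) * mPoly m m (a+b) (a+b) :=
      sum_le_hasSum _ (fun i _ => div_nonneg (mul_nonneg (mPoly_nonneg ha hb) (mPoly_nonneg ha hb))
        (Nat.cast_nonneg _)) (keyId ha hb m m)
    calc ∑ n ∈ Finset.range M, mPoly n m a b ^ 2 / ((n.factorial : ℝ) * (m.factorial : ℝ)) * t^m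
        = (∑ n ∈ Finset.range M, mPoly n m a b * mPoly n m a b / (n.factorial : ℝ))
            * (t^m / (m.factorial : ℝ)) := by
          rw [Finset.sum_mul]
          exact Finset.sum_congr rfl fun n _ => e n
      _ ≤ (Real.exp (a^2) * mPoly m m (a+b) (a+b)) * (t^m / (m.factorial : ℝ)) := by
          apply mul_le_mul_of_nonneg_right h1 (by positivity)
      _ = Real.exp (a^2) * (mPoly m m (a+b) (a+b) / (m.factorial : ℝ)) * t^m := by ring
      _ ≤ Real.exp (a^2) * (1+(a+b)^2)^m * t^m := by
          have := mPoly_diag_div_le hs m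
          have hexp : (0:ℝ) ≤ Real.exp (a^2) := (Real.exp_pos _).le
          apply mul_le_mul_of_nonneg_right _ (pow_nonneg ht m)
          exact mul_le_mul_of_nonneg_left this hexp
      _ = Real.exp (a^2) * ((1+(a+b)^2) * t)^m := by rw [mul_pow]; ring
      _ ≤ Real.exp (a^2) * θ^m := by
          apply mul_le_mul_of_nonneg_left _ (Real.exp_pos _).le
          exact pow_le_pow_left₀ (by positivity) hθ m
  calc ∑ m ∈ Finset.range M', ∑ n ∈ Finset.range M,
        mPoly n m a b ^ 2 / ((n.factorial : ℝ) * (m.factorial : ℝ)) * t^m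
      ≤ ∑ m ∈ Finset.range M', Real.exp (a^2) * θ^m := Finset.sum_le_sum fun m _ => inner m
    _ = Real.exp (a^2) * ∑ m ∈ Finset.range M', θ^m := by rw [Finset.mul_sum]
    _ ≤ Real.exp (a^2) * (1-θ)⁻¹ := by
        apply mul_le_mul_of_nonneg_left _ (Real.exp_pos _).le
        calc ∑ m ∈ Finset.range M', θ^m ≤ ∑' m : ℕ, θ^m :=
            Summable.sum_le_tsum _ (fun i _ => pow_nonneg hθ0 i) (summable_geometric_of_lt_one hθ0 hθ1)
          _ = (1-θ)⁻¹ := tsum_geometric_of_lt_one hθ0 hθ1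


noncomputable def gfun (K R S c : ℝ) (i : ℕ+) (n m : ℕ) : ℝ :=
  mPoly n m (K * R ^ (i:ℕ)) (K * S ^ (i:ℕ)) ^ 2
    / ((n.factorial : ℝ) * (m.factorial : ℝ)) * ((c^2) ^ (i:ℕ)) ^ m

lemma gfun_zero (K R S c : ℝ) (i : ℕ+) : gfun K R S c i 0 0 = 1 := by
  simp [gfun, mPoly_zero_right]

lemma gfun_nonneg {K R S c : ℝ} (hK : 0 ≤ K) (hR : 0 ≤ R) (hS : 0 ≤ S) (i : ℕ+) (n m : ℕ) :
    0 ≤ gfun K R S c i n m := by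
  have h1 : 0 ≤ mPoly n m (K * R ^ (i:ℕ)) (K * S ^ (i:ℕ)) :=
    mPoly_nonneg (by positivity) (by positivity)
  have h2 : (0:ℝ) ≤ ((c^2) ^ (i:ℕ)) ^ m := by positivity
  have h3 : (0:ℝ) ≤ (n.factorial : ℝ) * (m.factorial : ℝ) := by positivity
  exact mul_nonneg (div_nonneg (pow_nonneg h1 2) h3) h2

lemma termBound (ωp ωm : ℕ+ → ℂ) (K R S c : ℝ)
    (hK : 0 ≤ K) (hR : 0 ≤ R) (hS : 0 ≤ S) (hc : 0 ≤ c)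
    (hbp : ∀ i : ℕ+, ‖ωp i‖ ≤ K * R ^ (i : ℕ))
    (hbm : ∀ i : ℕ+, ‖ωm i‖ ≤ K * S ^ (i : ℕ))
    (η ν : MultiIndex) :
    ‖vElem ωp ωm η ν‖ ^ 2 * c ^ (2 * miWt ν)
      ≤ ∏ i ∈ η.support ∪ ν.support, gfun K R S c i (η i) (ν i) := by
  set u := η.support ∪ ν.support with hu
  have hfη : ((miFact η : ℕ) : ℝ) = ∏ i ∈ u, ((η i).factorial : ℝ) := by
    rw [miFact, Nat.cast_prod]
    apply Finset.prod_subset Finset.subset_union_left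
    intro i _ hi
    rw [Finsupp.notMem_support_iff.1 hi]
    simp
  have hfν : ((miFact ν : ℕ) : ℝ) = ∏ i ∈ u, ((ν i).factorial : ℝ) := by
    rw [miFact, Nat.cast_prod]
    apply Finset.prod_subset Finset.subset_union_right
    intro i _ hi
    rw [Finsupp.notMem_support_iff.1 hi]
    simp
  have hc2 : c ^ (2 * miWt ν) = ∏ i ∈ u, ((c^2) ^ (i:ℕ)) ^ (ν i) := by
    have h1 : 2 * miWt ν = ∑ i ∈ ν.support, 2 * ((i:ℕ) * ν i) := by
      rw [miWt, Finset.mul_sum]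
    rw [h1, ← Finset.prod_pow_eq_pow_sum]
    have h2 : ∀ i : ℕ+, c ^ (2 * ((i:ℕ) * ν i)) = ((c^2) ^ (i:ℕ)) ^ (ν i) := by
      intro i
      rw [← pow_mul, ← pow_mul, ← mul_assoc]
    rw [Finset.prod_congr rfl fun i _ => h2 i]
    apply Finset.prod_subset Finset.subset_union_right
    intro i _ hi
    rw [Finsupp.notMem_support_iff.1 hi]
    simp
  have hx : (0:ℝ) ≤ ((miFact η : ℕ) : ℝ) * ((miFact ν : ℕ) : ℝ) := by positivity
  have hv : ‖vElem ωp ωm η ν‖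
      = (1 / Real.sqrt (((miFact η : ℕ) : ℝ) * ((miFact ν : ℕ) : ℝ)))
        * ∏ i ∈ u, ‖mPoly (η i) (ν i) (ωp i) (-ωm i)‖ := by
    rw [vElem, norm_mul, Complex.norm_real, norm_prod, Real.norm_eq_abs,
      abs_of_nonneg (by positivity)]
  have hmain : ‖vElem ωp ωm η ν‖ ^ 2 * c ^ (2 * miWt ν)
      = ∏ i ∈ u, (‖mPoly (η i) (ν i) (ωp i) (-ωm i)‖ ^ 2
          / (((η i).factorial : ℝ) * ((ν i).factorial : ℝ)) * ((c^2) ^ (i:ℕ)) ^ (ν i)) := by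
    rw [hv, mul_pow, div_pow, one_pow, Real.sq_sqrt hx, hc2,
      Finset.prod_mul_distrib, Finset.prod_div_distrib, ← Finset.prod_pow,
      Finset.prod_mul_distrib, ← hfη, ← hfν]
    ring
  rw [hmain]
  apply Finset.prod_le_prod
  · intro i _
    have h3 : (0:ℝ) ≤ (((η i).factorial : ℝ) * ((ν i).factorial : ℝ)) := by positivity
    exact mul_nonneg (div_nonneg (pow_nonneg (norm_nonneg _) 2) h3) (by positivity)
  · intro i _
    have hnm : ‖mPoly (η i) (ν i) (ωp i) (-ωm i)‖
        ≤ mPoly (η i) (ν i) (K * R ^ (i:ℕ)) (K * S ^ (i:ℕ)) := by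
      refine (norm_mPoly_le _ _ _ _).trans (mPoly_mono (norm_nonneg _) (norm_nonneg _)
        (hbp i) ?_)
      rw [norm_neg]
      exact hbm i
    rw [gfun]
    gcongr


lemma geom_finset_le {x : ℝ} (h0 : 0 ≤ x) (h1 : x < 1) (s : Finset ℕ+) :
    ∑ i ∈ s, x ^ (i:ℕ) ≤ (1-x)⁻¹ := by
  have hinj : ∀ p ∈ s, ∀ q ∈ s, ((p:ℕ+):ℕ) = ((q:ℕ+):ℕ) → p = q := by
    intro p _ q _ h
    exact PNat.coe_injective h
  calc ∑ i ∈ s, x ^ (i:ℕ) = ∑ n ∈ s.image (fun i : ℕ+ => (i:ℕ)), x ^ n :=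
      (Finset.sum_image hinj).symm
    _ ≤ ∑' n : ℕ, x ^ n := Summable.sum_le_tsum _ (fun n _ => pow_nonneg h0 n)
        (summable_geometric_of_lt_one h0 h1)
    _ = (1-x)⁻¹ := tsum_geometric_of_lt_one h0 h1

lemma inv_one_sub_le_exp {ρ x : ℝ} (hx0 : 0 ≤ x) (hxρ : x ≤ ρ) (hρ1 : ρ < 1) :
    (1 - x)⁻¹ ≤ Real.exp ((1-ρ)⁻¹ * x) := by
  have h1 : (0:ℝ) < 1 - ρ := by linarith
  have h2 : (0:ℝ) < 1 - x := by linarith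
  have h3 : (1-ρ)⁻¹ * (1-ρ) = 1 := inv_mul_cancel₀ h1.ne'
  have h4 : (0:ℝ) ≤ (1-ρ)⁻¹ := by positivity
  have key : (1 - x)⁻¹ ≤ 1 + (1-ρ)⁻¹ * x := by
    rw [← one_div, div_le_iff₀ h2]
    have h5 : (1:ℝ) ≤ (1-ρ)⁻¹ * (1-x) := by
      calc (1:ℝ) = (1-ρ)⁻¹ * (1-ρ) := h3.symm
        _ ≤ (1-ρ)⁻¹ * (1-x) := by
            apply mul_le_mul_of_nonneg_left (by linarith) h4
    nlinarith [mul_le_mul_of_nonneg_left h5 hx0]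
  calc (1 - x)⁻¹ ≤ 1 + (1-ρ)⁻¹ * x := key
    _ ≤ Real.exp ((1-ρ)⁻¹ * x) := by
        have := Real.add_one_le_exp ((1-ρ)⁻¹ * x)
        linarith

end Aux

open Aux

set_option maxHeartbeats 2000000

/-- If `|ω_i| ≤ K·R^i` with `0 < R < 1`, `|ω_{−i}| ≤ K·S^i` with `S > 0`, `K > 1`, and
`0 < c < (1 + K²(R+S)²)^{−1/2}`, then `∑_{η,ν} |v_{η,ν}(ω)|²·c^{2‖ν‖} < ∞`, i.e. the
operator `B(ω) = V(ω)·c^N` (with `N` the number operator) is Hilbert–Schmidt. -/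
theorem stmt3 (ωp ωm : ℕ+ → ℂ) (K R S c : ℝ)
    (hK : 1 < K) (hR0 : 0 < R) (hR1 : R < 1) (hS : 0 < S)
    (hbp : ∀ i : ℕ+, ‖ωp i‖ ≤ K * R ^ (i : ℕ))
    (hbm : ∀ i : ℕ+, ‖ωm i‖ ≤ K * S ^ (i : ℕ))
    (hc0 : 0 < c) (hc1 : c < (Real.sqrt (1 + K ^ 2 * (R + S) ^ 2))⁻¹) :
    Summable (fun p : MultiIndex × MultiIndex =>
      ‖vElem ωp ωm p.1 p.2‖ ^ 2 * c ^ (2 * miWt p.2)) := by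
  classical
  set X : ℝ := 1 + K ^ 2 * (R + S) ^ 2 with hX_def
  have hX1 : (1:ℝ) ≤ X := by nlinarith
  have hX0 : (0:ℝ) < X := by linarith
  set ρ : ℝ := X * c ^ 2 with hρ_def
  have hρ0 : (0:ℝ) ≤ ρ := by positivity
  have hρ1 : ρ < 1 := by
    have h2 : c ^ 2 < ((Real.sqrt X)⁻¹) ^ 2 := by
      apply pow_lt_pow_left₀ hc1 hc0.le (by norm_num)
    rw [inv_pow, Real.sq_sqrt hX0.le] at h2
    calc ρ = X * c ^ 2 := hρ_def
      _ < X * X⁻¹ := by exact mul_lt_mul_of_pos_left h2 hX0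
      _ = 1 := mul_inv_cancel₀ hX0.ne'
  set ℓ : ℕ+ → ℝ := fun i => K ^ 2 * (R ^ 2) ^ (i:ℕ) + (1-ρ)⁻¹ * ρ ^ (i:ℕ) with hℓ_def
  set L : ℝ := K ^ 2 * (1 - R ^ 2)⁻¹ + (1-ρ)⁻¹ * (1-ρ)⁻¹ with hL_def
  -- the key per-mode estimate
  have hθi : ∀ i : ℕ+, (1 + (K * R ^ (i:ℕ) + K * S ^ (i:ℕ)) ^ 2) * ((c^2) ^ (i:ℕ))
      ≤ ρ ^ (i:ℕ) := by
    intro i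
    have hi0 : (i:ℕ) ≠ 0 := i.pos.ne'
    have h1 : R ^ (i:ℕ) + S ^ (i:ℕ) ≤ (R + S) ^ (i:ℕ) :=
      pow_add_pow_le hR0.le hS.le hi0
    have h2 : (K * R ^ (i:ℕ) + K * S ^ (i:ℕ)) ^ 2
        ≤ K ^ 2 * ((R + S) ^ 2) ^ (i:ℕ) := by
      have e : K * R ^ (i:ℕ) + K * S ^ (i:ℕ) = K * (R ^ (i:ℕ) + S ^ (i:ℕ)) := by ring
      have h3 : (R ^ (i:ℕ) + S ^ (i:ℕ)) ^ 2 ≤ ((R + S) ^ (i:ℕ)) ^ 2 :=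
        pow_le_pow_left₀ (by positivity) h1 2
      have h4 : ((R + S) ^ (i:ℕ)) ^ 2 = ((R+S)^2) ^ (i:ℕ) := by
        rw [← pow_mul, mul_comm, pow_mul]
      calc (K * R ^ (i:ℕ) + K * S ^ (i:ℕ)) ^ 2
          = K ^ 2 * (R ^ (i:ℕ) + S ^ (i:ℕ)) ^ 2 := by rw [e, mul_pow]
        _ ≤ K ^ 2 * ((R + S) ^ (i:ℕ)) ^ 2 :=
            mul_le_mul_of_nonneg_left h3 (by positivity)
        _ = K ^ 2 * ((R + S) ^ 2) ^ (i:ℕ) := by rw [h4]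
    have h5 : K ^ 2 * ((R + S) ^ 2) ^ (i:ℕ) ≤ (K ^ 2 * (R + S) ^ 2) ^ (i:ℕ) := by
      rw [mul_pow]
      apply mul_le_mul_of_nonneg_right _ (by positivity)
      exact le_self_pow₀ (by nlinarith) hi0
    have h6 : 1 + (K ^ 2 * (R + S) ^ 2) ^ (i:ℕ) ≤ X ^ (i:ℕ) := by
      have h := pow_add_pow_le (x := (1:ℝ)) (y := K ^ 2 * (R + S) ^ 2)
        (by norm_num) (by positivity) hi0
      rw [one_pow] at h
      rw [hX_def]
      exact h
    have h7 : (0:ℝ) ≤ (c^2) ^ (i:ℕ) := by positivity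
    calc (1 + (K * R ^ (i:ℕ) + K * S ^ (i:ℕ)) ^ 2) * ((c^2) ^ (i:ℕ))
        ≤ (X ^ (i:ℕ)) * ((c^2) ^ (i:ℕ)) := by
          apply mul_le_mul_of_nonneg_right _ h7
          calc 1 + (K * R ^ (i:ℕ) + K * S ^ (i:ℕ)) ^ 2
              ≤ 1 + (K ^ 2 * (R + S) ^ 2) ^ (i:ℕ) := by linarith [h2.trans h5]
            _ ≤ X ^ (i:ℕ) := h6
      _ = ρ ^ (i:ℕ) := by rw [hρ_def, mul_pow]
  have hbox : ∀ (i : ℕ+) (M : ℕ),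
      ∑ q ∈ Finset.range M ×ˢ Finset.range M, gfun K R S c i q.1 q.2 ≤ Real.exp (ℓ i) := by
    intro i M
    have hθ1 : ρ ^ (i:ℕ) < 1 := pow_lt_one₀ hρ0 hρ1 i.pos.ne'
    have hmb := modeBound (a := K * R ^ (i:ℕ)) (b := K * S ^ (i:ℕ))
      (t := (c^2) ^ (i:ℕ)) (θ := ρ ^ (i:ℕ)) (by positivity) (by positivity)
      (by positivity) (hθi i) hθ1 M M
    have ha2 : (K * R ^ (i:ℕ)) ^ 2 = K ^ 2 * (R ^ 2) ^ (i:ℕ) := by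
      rw [mul_pow, ← pow_mul, mul_comm (i:ℕ) 2, pow_mul]
    have hxρ : ρ ^ (i:ℕ) ≤ ρ := by
      have h := pow_le_pow_of_le_one hρ0 hρ1.le (Nat.one_le_iff_ne_zero.2 i.pos.ne')
      rwa [pow_one] at h
    have hinv := inv_one_sub_le_exp (pow_nonneg hρ0 (i:ℕ)) hxρ hρ1
    calc ∑ q ∈ Finset.range M ×ˢ Finset.range M, gfun K R S c i q.1 q.2
        = ∑ n ∈ Finset.range M, ∑ m ∈ Finset.range M,
            mPoly n m (K * R ^ (i:ℕ)) (K * S ^ (i:ℕ)) ^ 2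
              / ((n.factorial : ℝ) * (m.factorial : ℝ)) * ((c^2) ^ (i:ℕ)) ^ m := by
          rw [Finset.sum_product]
          simp only [gfun]
      _ ≤ Real.exp ((K * R ^ (i:ℕ))^2) * (1 - ρ ^ (i:ℕ))⁻¹ := hmb
      _ ≤ Real.exp ((K * R ^ (i:ℕ))^2) * Real.exp ((1-ρ)⁻¹ * ρ ^ (i:ℕ)) := by
          exact mul_le_mul_of_nonneg_left hinv (Real.exp_pos _).le
      _ = Real.exp ((K * R ^ (i:ℕ))^2 + (1-ρ)⁻¹ * ρ ^ (i:ℕ)) := (Real.exp_add _ _).symm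
      _ = Real.exp (ℓ i) := by rw [hℓ_def, ha2]
  have hsumℓ : ∀ s : Finset ℕ+, ∑ i ∈ s, ℓ i ≤ L := by
    intro s
    have hR2 : R ^ 2 < 1 := by nlinarith
    have hR2' : (0:ℝ) ≤ R ^ 2 := by positivity
    have hu : (0:ℝ) ≤ (1-ρ)⁻¹ := by
      have : (0:ℝ) < 1 - ρ := by linarith
      positivity
    calc ∑ i ∈ s, ℓ i
        = K ^ 2 * (∑ i ∈ s, (R ^ 2) ^ (i:ℕ)) + (1-ρ)⁻¹ * (∑ i ∈ s, ρ ^ (i:ℕ)) := by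
          rw [hℓ_def, Finset.sum_add_distrib, Finset.mul_sum, Finset.mul_sum]
      _ ≤ K ^ 2 * (1 - R ^ 2)⁻¹ + (1-ρ)⁻¹ * (1-ρ)⁻¹ := by
          apply add_le_add
          · exact mul_le_mul_of_nonneg_left (geom_finset_le hR2' hR2 s) (by positivity)
          · exact mul_le_mul_of_nonneg_left (geom_finset_le hρ0 hρ1 s) hu
      _ = L := hL_def.symm
  apply summable_of_sum_le (c := Real.exp L)
    (fun p => mul_nonneg (pow_nonneg (norm_nonneg _) 2) (pow_nonneg hc0.le _))
  intro T
  set s : Finset ℕ+ := T.sup (fun p => p.1.support ∪ p.2.support) with hs_def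
  set M : ℕ := (T.sup fun p => max (p.1.support.sup p.1) (p.2.support.sup p.2)) + 1
    with hM_def
  have hsupp : ∀ p ∈ T, p.1.support ∪ p.2.support ⊆ s := by
    intro p hp
    have h := Finset.le_sup (f := fun p : MultiIndex × MultiIndex =>
      p.1.support ∪ p.2.support) hp
    simpa [Finset.le_eq_subset] using h
  have hval : ∀ p ∈ T, ∀ i : ℕ+, p.1 i < M ∧ p.2 i < M := by
    intro p hp i
    have hM1 := Finset.le_sup (f := fun p : MultiIndex × MultiIndex =>
      max (p.1.support.sup p.1) (p.2.support.sup p.2)) hp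
    have hM1' : max (p.1.support.sup p.1) (p.2.support.sup p.2)
        ≤ T.sup (fun p => max (p.1.support.sup p.1) (p.2.support.sup p.2)) := hM1
    constructor
    · by_cases hi : i ∈ p.1.support
      · have h1 : p.1 i ≤ p.1.support.sup p.1 := Finset.le_sup hi
        have h3 : p.1 i ≤ T.sup (fun p => max (p.1.support.sup p.1) (p.2.support.sup p.2)) :=
          le_trans h1 (le_trans (le_max_left _ _) hM1')
        rw [hM_def]
        exact Nat.lt_succ_of_le h3
      · rw [Finsupp.notMem_support_iff.1 hi, hM_def]; exact Nat.succ_pos _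
    · by_cases hi : i ∈ p.2.support
      · have h1 : p.2 i ≤ p.2.support.sup p.2 := Finset.le_sup hi
        have h3 : p.2 i ≤ T.sup (fun p => max (p.1.support.sup p.1) (p.2.support.sup p.2)) :=
          le_trans h1 (le_trans (le_max_right _ _) hM1')
        rw [hM_def]
        exact Nat.lt_succ_of_le h3
      · rw [Finsupp.notMem_support_iff.1 hi, hM_def]; exact Nat.succ_pos _
  set φ : (MultiIndex × MultiIndex) → ((i : ℕ+) → i ∈ s → ℕ × ℕ) :=
    fun p i _ => (p.1 i, p.2 i) with hφ_def
  have hinj : ∀ p ∈ T, ∀ p' ∈ T, φ p = φ p' → p = p' := by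
    intro p hp p' hp' h
    have hcomp : ∀ (i : ℕ+) (hi : i ∈ s), (p.1 i, p.2 i) = (p'.1 i, p'.2 i) := by
      intro i hi
      exact congrFun (congrFun h i) hi
    have h1 : p.1 = p'.1 := by
      apply Finsupp.ext
      intro i
      by_cases hi : i ∈ s
      · exact congrArg Prod.fst (hcomp i hi)
      · have e1 : p.1 i = 0 := Finsupp.notMem_support_iff.1
          (fun hmem => hi (hsupp p hp (Finset.mem_union_left _ hmem)))
        have e2 : p'.1 i = 0 := Finsupp.notMem_support_iff.1
          (fun hmem => hi (hsupp p' hp' (Finset.mem_union_left _ hmem)))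
        rw [e1, e2]
    have h2 : p.2 = p'.2 := by
      apply Finsupp.ext
      intro i
      by_cases hi : i ∈ s
      · exact congrArg Prod.snd (hcomp i hi)
      · have e1 : p.2 i = 0 := Finsupp.notMem_support_iff.1
          (fun hmem => hi (hsupp p hp (Finset.mem_union_right _ hmem)))
        have e2 : p'.2 i = 0 := Finsupp.notMem_support_iff.1
          (fun hmem => hi (hsupp p' hp' (Finset.mem_union_right _ hmem)))
        rw [e1, e2]
    exact Prod.ext h1 h2
  have hsubset : T.image φ ⊆ s.pi (fun _ => Finset.range M ×ˢ Finset.range M) := by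
    intro q hq
    rcases Finset.mem_image.1 hq with ⟨p, hp, rfl⟩
    rw [Finset.mem_pi]
    intro i hi
    rw [Finset.mem_product]
    exact ⟨Finset.mem_range.2 (hval p hp i).1, Finset.mem_range.2 (hval p hp i).2⟩
  calc ∑ p ∈ T, ‖vElem ωp ωm p.1 p.2‖ ^ 2 * c ^ (2 * miWt p.2)
      ≤ ∑ p ∈ T, ∏ i ∈ s, gfun K R S c i (p.1 i) (p.2 i) := by
        apply Finset.sum_le_sum
        intro p hp
        refine le_trans (termBound ωp ωm K R S c (by linarith) hR0.le hS.le hc0.le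
          hbp hbm p.1 p.2) (le_of_eq ?_)
        apply Finset.prod_subset (hsupp p hp)
        intro i _ hi
        have e1 : p.1 i = 0 := Finsupp.notMem_support_iff.1
          (fun hmem => hi (Finset.mem_union_left _ hmem))
        have e2 : p.2 i = 0 := Finsupp.notMem_support_iff.1
          (fun hmem => hi (Finset.mem_union_right _ hmem))
        rw [e1, e2, gfun_zero]
    _ = ∑ p ∈ T, ∏ x ∈ s.attach, gfun K R S c x.1 ((φ p) x.1 x.2).1 ((φ p) x.1 x.2).2 := by
        refine Finset.sum_congr rfl fun p _ => ?_
        exact (Finset.prod_attach s (fun i => gfun K R S c i (p.1 i) (p.2 i))).symm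
    _ = ∑ q ∈ T.image φ, ∏ x ∈ s.attach, gfun K R S c x.1 (q x.1 x.2).1 (q x.1 x.2).2 :=
        (Finset.sum_image (f := fun q : (i : ℕ+) → i ∈ s → ℕ × ℕ =>
          ∏ x ∈ s.attach, gfun K R S c x.1 (q x.1 x.2).1 (q x.1 x.2).2) hinj).symm
    _ ≤ ∑ q ∈ s.pi (fun _ => Finset.range M ×ˢ Finset.range M),
          ∏ x ∈ s.attach, gfun K R S c x.1 (q x.1 x.2).1 (q x.1 x.2).2 := by
        apply Finset.sum_le_sum_of_subset_of_nonneg hsubset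
        intro q _ _
        exact Finset.prod_nonneg fun x _ =>
          gfun_nonneg (by linarith) hR0.le hS.le _ _ _
    _ = ∏ i ∈ s, ∑ q ∈ Finset.range M ×ˢ Finset.range M, gfun K R S c i q.1 q.2 :=
        (Finset.prod_sum s (fun _ => Finset.range M ×ˢ Finset.range M)
          (fun i q => gfun K R S c i q.1 q.2)).symm
    _ ≤ ∏ i ∈ s, Real.exp (ℓ i) := by
        apply Finset.prod_le_prod
        · intro i _
          exact Finset.sum_nonneg fun q _ => gfun_nonneg (by linarith) hR0.le hS.le _ _ _
        · intro i _
          exact hbox i M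
    _ = Real.exp (∑ i ∈ s, ℓ i) := (Real.exp_sum s ℓ).symm
    _ ≤ Real.exp L := Real.exp_le_exp.2 (hsumℓ s)
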